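/- Regard 𝒫 as a smooth real-valued function on ℂ³ ≅ ℝ⁶. For every w = (w₁,w₂,w₃) ∈ ℂ³ and every direction h = (h₁,h₂,h₃) ∈ ℂ³, the Fréchet derivative of 𝒫 at w applied to h equals −2 Re[ h̄₁·F₁(w) + h̄₂·F₂(w) + h̄₃·F₃(w) ], where F₁(w) = w₁(1−|w₁|²) + w₂(w₂w̄₃/2 − w₁w̄₂), F₂(w) = w₂(1 − |w₂|²/2 − |w₁|² − |w₃|²) + w̄₂w₁w₃, and F₃(w) = w₃(1−|w₃|²) + w₂(w₂w̄₁/2 − w₃w̄₂). In other words, the zeroth-order nonlinear terms appearing in the SO(5) Yang–Mills equations are (minus) the gradient of the effective potential 𝒫. -/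

import Mathlib

/-- The effective potential `𝒫` of the SO(5) model, viewed as a smooth real-valued
function on `ℂ³ ≅ ℝ⁶`. -/
noncomputable def Pot (w : ℂ × ℂ × ℂ) : ℝ :=
  (1 - Complex.normSq w.1) ^ 2 / 2 + (1 - Complex.normSq w.2.2) ^ 2 / 2
    + Complex.normSq w.2.1 *
        (Complex.normSq w.1 + Complex.normSq w.2.2 + Complex.normSq w.2.1 / 4 - 1)
    - (w.2.1 ^ 2 * (starRingEnd ℂ) (w.1 * w.2.2)).re

/-- `F₁`: the zeroth-order nonlinear term of the first SO(5) Yang–Mills equation. -/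
noncomputable def F₁ (w : ℂ × ℂ × ℂ) : ℂ :=
  w.1 * (1 - (Complex.normSq w.1 : ℂ))
    + w.2.1 * (w.2.1 * (starRingEnd ℂ) w.2.2 / 2 - w.1 * (starRingEnd ℂ) w.2.1)

/-- `F₂`: the zeroth-order nonlinear term of the second SO(5) Yang–Mills equation. -/
noncomputable def F₂ (w : ℂ × ℂ × ℂ) : ℂ :=
  w.2.1 * (1 - (Complex.normSq w.2.1 : ℂ) / 2 - (Complex.normSq w.1 : ℂ)
      - (Complex.normSq w.2.2 : ℂ))
    + (starRingEnd ℂ) w.2.1 * w.1 * w.2.2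

/-- `F₃`: the zeroth-order nonlinear term of the third SO(5) Yang–Mills equation. -/
noncomputable def F₃ (w : ℂ × ℂ × ℂ) : ℂ :=
  w.2.2 * (1 - (Complex.normSq w.2.2 : ℂ))
    + w.2.1 * (w.2.1 * (starRingEnd ℂ) w.1 / 2 - w.2.2 * (starRingEnd ℂ) w.2.1)

/-- The Fréchet derivative of the effective potential `𝒫` at `w`, applied to a
direction `h`, is `-2 Re[h̄₁ F₁(w) + h̄₂ F₂(w) + h̄₃ F₃(w)]`; i.e. the zeroth-order
nonlinear terms of the SO(5) Yang–Mills equations are minus the gradient of `𝒫`. -/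
theorem fderiv_pot (w h : ℂ × ℂ × ℂ) :
    fderiv ℝ Pot w h =
      -2 * ((starRingEnd ℂ) h.1 * F₁ w + (starRingEnd ℂ) h.2.1 * F₂ w
        + (starRingEnd ℂ) h.2.2 * F₃ w).re := by
  have h1 : HasFDerivAt (fun p : ℂ × ℂ × ℂ => p.1)
      (ContinuousLinearMap.fst ℝ ℂ (ℂ × ℂ)) w := hasFDerivAt_fst
  have h2 : HasFDerivAt (fun p : ℂ × ℂ × ℂ => p.2.1)
      ((ContinuousLinearMap.fst ℝ ℂ ℂ).comp (ContinuousLinearMap.snd ℝ ℂ (ℂ × ℂ))) w :=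
    hasFDerivAt_fst.comp w hasFDerivAt_snd
  have h3 : HasFDerivAt (fun p : ℂ × ℂ × ℂ => p.2.2)
      ((ContinuousLinearMap.snd ℝ ℂ ℂ).comp (ContinuousLinearMap.snd ℝ ℂ (ℂ × ℂ))) w :=
    hasFDerivAt_snd.comp w hasFDerivAt_snd
  have hc1 := (Complex.conjCLE.toContinuousLinearMap.hasFDerivAt (x := w.1)).comp w h1
  have hc2 := (Complex.conjCLE.toContinuousLinearMap.hasFDerivAt (x := w.2.1)).comp w h2
  have hc3 := (Complex.conjCLE.toContinuousLinearMap.hasFDerivAt (x := w.2.2)).comp w h3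
  have m1 := h1.mul hc1
  have m2 := h2.mul hc2
  have m3 := h3.mul hc3
  have t1 := ((m1.const_sub 1).mul (m1.const_sub 1)).mul_const ((2:ℂ)⁻¹)
  have t2 := ((m3.const_sub 1).mul (m3.const_sub 1)).mul_const ((2:ℂ)⁻¹)
  have t3 := m2.mul (((m1.add m3).add (m2.mul_const ((4:ℂ)⁻¹))).sub_const 1)
  have t4 := ((h2.mul h2).mul hc1).mul hc3
  have hG := (((t1.add t2).add t3).sub t4)
  have hPotC := Complex.reCLM.hasFDerivAt.comp w hG
  have hPot := hPotC.congr_of_eventuallyEq (f₁ := Pot)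
    (Filter.Eventually.of_forall (fun p => by
      simp only [Pot, Function.comp_apply, Complex.reCLM_apply,
        ContinuousLinearEquiv.coe_coe, Complex.conjCLE_apply, map_mul,
        Complex.normSq_apply, Complex.mul_re, Complex.mul_im, Complex.add_re, Complex.add_im,
        Complex.sub_re, Complex.sub_im, Complex.one_re, Complex.one_im,
        Complex.conj_re, Complex.conj_im, Complex.inv_re, Complex.inv_im,
        Complex.re_ofNat, Complex.im_ofNat, pow_two, Pi.mul_apply, Pi.add_apply, Pi.sub_apply, Pi.pow_apply]
      ring))
  rw [hPot.fderiv]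
  simp only [F₁, F₂, F₃, ContinuousLinearMap.coe_comp', Function.comp_apply,
    ContinuousLinearMap.add_apply, ContinuousLinearMap.sub_apply,
    ContinuousLinearMap.neg_apply, ContinuousLinearMap.smul_apply,
    ContinuousLinearMap.coe_fst', ContinuousLinearMap.coe_snd',
    ContinuousLinearEquiv.coe_coe, Complex.conjCLE_apply, Complex.reCLM_apply,
    smul_eq_mul, Complex.div_re, Complex.div_im, Complex.normSq_apply,
    Complex.mul_re, Complex.mul_im, Complex.add_re, Complex.add_im,
    Complex.sub_re, Complex.sub_im, Complex.neg_re, Complex.neg_im,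
    Complex.one_re, Complex.one_im, Complex.ofReal_re, Complex.ofReal_im,
    Complex.conj_re, Complex.conj_im, Complex.inv_re, Complex.inv_im,
    Complex.re_ofNat, Complex.im_ofNat, pow_two, Pi.mul_apply, Pi.add_apply, Pi.sub_apply, Pi.pow_apply]
  ring
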